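/- Let Y ∈ ℝ^{D×N} with 1 ≤ K ≤ D, and let p be a probability mass function on {1,…,K} with p(b) > 0 for every b. If (X*, Γ*) ∈ ℝ^{K×N} × ℝ^{D×K} is a global minimizer of the nested dropout cost C(X,Γ) = Σ_{b=1}^{K} p(b)·‖Y − Γ^{(b)} X^{(b)}‖_F², then (X*, Γ*) is also a global minimizer of the standard autoencoder cost C^{(K)}(X,Γ) = ‖Y − Γ X‖_F² over all X ∈ ℝ^{K×N}, Γ ∈ ℝ^{D×K}. -/

import Mathlib

open Matrix BigOperators

/-- The `b`-truncation cost `C⁽ᵇ⁾(X,Γ) = ‖Y − Γ⁽ᵇ⁾ X⁽ᵇ⁾‖_F²`, where `Γ⁽ᵇ⁾ X⁽ᵇ⁾`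
uses only the first `b` columns of `Γ` and first `b` rows of `X`. -/
noncomputable def truncCost {D N K : ℕ} (Y : Matrix (Fin D) (Fin N) ℝ)
    (X : Matrix (Fin K) (Fin N) ℝ) (G : Matrix (Fin D) (Fin K) ℝ) (b : ℕ) : ℝ :=
  ∑ i, ∑ j, (Y i j - ∑ k : Fin K, if (k : ℕ) < b then G i k * X k j else 0) ^ 2

/-- The nested dropout cost: mixture of the `b`-truncation costs, `b = 1, …, K`,
with mixing weights `p`. Here `b : Fin K` represents the truncation index `b+1`. -/
noncomputable def ndCost {D N K : ℕ} (Y : Matrix (Fin D) (Fin N) ℝ) (p : Fin K → ℝ)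
    (X : Matrix (Fin K) (Fin N) ℝ) (G : Matrix (Fin D) (Fin K) ℝ) : ℝ :=
  ∑ b : Fin K, p b * truncCost Y X G ((b : ℕ) + 1)

namespace ND

open Finset RealInnerProductSpace

noncomputable def col {m n : ℕ} (A : Matrix (Fin m) (Fin n) ℝ) (j : Fin n) :
    EuclideanSpace ℝ (Fin m) :=
  (WithLp.equiv 2 _).symm (fun i => A i j)

@[simp] lemma col_apply {m n : ℕ} (A : Matrix (Fin m) (Fin n) ℝ) (j : Fin n) (i : Fin m) :
    col A j i = A i j := rfl

lemma piLp_sum_apply {ι κ : Type*} [Fintype ι] (f : κ → EuclideanSpace ℝ ι) (s : Finset κ)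
    (i : ι) : (∑ k ∈ s, f k) i = ∑ k ∈ s, f k i :=
  by rw [WithLp.ofLp_sum, Finset.sum_apply]

lemma normsq {D : ℕ} (v : EuclideanSpace ℝ (Fin D)) : ‖v‖ ^ 2 = ∑ i, v i ^ 2 := by
  rw [← real_inner_self_eq_norm_sq]
  rw [real_inner_self_eq_norm_sq]; exact EuclideanSpace.real_norm_sq_eq v

lemma sum_ite_lt {D b : ℕ} (hb : b ≤ D) (μ : Fin D → ℝ) :
    (∑ i : Fin D, if (i : ℕ) < b then μ i else 0) = ∑ t : Fin b, μ (Fin.castLE hb t) := by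
  classical
  set ν : ℕ → ℝ := fun n => if h : n < D then μ ⟨n, h⟩ else 0 with hν
  have h1 : (∑ i : Fin D, if (i : ℕ) < b then μ i else 0)
      = ∑ n ∈ Finset.range D, (if n < b then ν n else 0) := by
    rw [← Fin.sum_univ_eq_sum_range]
    refine Finset.sum_congr rfl fun i _ => ?_
    simp [hν, i.isLt]
  have h2 : (Finset.range D).filter (· < b) = Finset.range b := by
    ext n; simp [Finset.mem_range, Finset.mem_filter]; omega
  rw [h1, ← Finset.sum_filter, h2, ← Fin.sum_univ_eq_sum_range]
  refine Finset.sum_congr rfl fun t _ => ?_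
  simp [hν, lt_of_lt_of_le t.isLt hb]
  rfl

lemma card_ite_lt {D b : ℕ} (hb : b ≤ D) :
    (∑ i : Fin D, if (i : ℕ) < b then (1 : ℝ) else 0) = b := by
  rw [sum_ite_lt hb]; simp

lemma kyfan {D : ℕ} {μ c : Fin D → ℝ} (hanti : Antitone μ) (hμ0 : ∀ i, 0 ≤ μ i)
    (hc0 : ∀ i, 0 ≤ c i) (hc1 : ∀ i, c i ≤ 1) {b : ℕ} (hcsum : ∑ i, c i ≤ b) :
    ∑ i, μ i * c i ≤ ∑ i : Fin D, if (i : ℕ) < b then μ i else 0 := by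
  classical
  by_cases hbD : b < D
  · set t : ℝ := μ ⟨b, hbD⟩ with ht
    have ht0 : 0 ≤ t := hμ0 _
    have key : ∀ i : Fin D, μ i * c i - (if (i : ℕ) < b then μ i else 0)
        ≤ t * (c i - (if (i : ℕ) < b then (1:ℝ) else 0)) := by
      intro i
      by_cases hi : (i : ℕ) < b
      · have hμt : t ≤ μ i := hanti (by exact Fin.le_def.mpr (le_of_lt hi))
        have : (μ i - t) * (c i - 1) ≤ 0 :=
          mul_nonpos_of_nonneg_of_nonpos (by linarith) (by linarith [hc1 i])
        simp only [if_pos hi]; nlinarith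
      · have hμt : μ i ≤ t := hanti (Fin.le_def.mpr (le_of_not_gt hi))
        have : (μ i - t) * c i ≤ 0 :=
          mul_nonpos_of_nonpos_of_nonneg (by linarith) (hc0 i)
        simp only [if_neg hi]; nlinarith
    have hsum := Finset.sum_le_sum (fun i (_ : i ∈ Finset.univ) => key i)
    rw [Finset.sum_sub_distrib] at hsum
    have h2 : ∑ i : Fin D, t * (c i - (if (i : ℕ) < b then (1:ℝ) else 0))
        = t * ((∑ i, c i) - b) := by
      rw [← Finset.mul_sum, Finset.sum_sub_distrib, card_ite_lt (le_of_lt hbD)]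
    rw [h2] at hsum
    have h3 : t * ((∑ i, c i) - b) ≤ 0 :=
      mul_nonpos_of_nonneg_of_nonpos ht0 (by linarith)
    linarith
  · push_neg at hbD
    have : ∀ i : Fin D, (if (i : ℕ) < b then μ i else 0) = μ i := fun i =>
      if_pos (lt_of_lt_of_le i.isLt hbD)
    simp only [this]
    refine Finset.sum_le_sum fun i _ => ?_
    nlinarith [hμ0 i, hc1 i, hc0 i]

lemma spectral {D N : ℕ} (y : Fin N → EuclideanSpace ℝ (Fin D)) :
    ∃ (μ : Fin D → ℝ) (U : OrthonormalBasis (Fin D) ℝ (EuclideanSpace ℝ (Fin D))),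
      Antitone μ ∧ (∀ i, 0 ≤ μ i) ∧
      (∀ q : EuclideanSpace ℝ (Fin D),
        ∑ j, ⟪y j, q⟫ ^ 2 = ∑ i, μ i * ⟪U i, q⟫ ^ 2) := by
  classical
  set T : EuclideanSpace ℝ (Fin D) →ₗ[ℝ] EuclideanSpace ℝ (Fin D) :=
    { toFun := fun v => ∑ j, ⟪y j, v⟫ • y j
      map_add' := by
        intro v w
        simp [inner_add_right, add_smul, Finset.sum_add_distrib]
      map_smul' := by
        intro c v
        simp [inner_smul_right, smul_smul, Finset.smul_sum] } with hTdef
  have hTapp : ∀ v, T v = ∑ j, ⟪y j, v⟫ • y j := fun v => rfl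
  have hsym : T.IsSymmetric := by
    intro v w
    rw [hTapp, hTapp, sum_inner, inner_sum]
    refine Finset.sum_congr rfl fun j _ => ?_
    rw [real_inner_smul_left, real_inner_smul_right, real_inner_comm (y j) v]
    ring
  have hquad0 : ∀ q, ⟪q, T q⟫ = ∑ j, ⟪y j, q⟫ ^ 2 := by
    intro q
    rw [hTapp, inner_sum]
    refine Finset.sum_congr rfl fun j _ => ?_
    rw [real_inner_smul_right, real_inner_comm q (y j)]
    ring
  set B := hsym.eigenvectorBasis finrank_euclideanSpace_fin with hB
  set lam := hsym.eigenvalues finrank_euclideanSpace_fin with hlam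
  set σ := Tuple.sort (fun i => - lam i) with hσ
  set μ : Fin D → ℝ := fun i => lam (σ i) with hμ
  set U := B.reindex σ.symm with hUdef
  have hU : ∀ i, U i = B (σ i) := by
    intro i; rw [hUdef, B.reindex_apply]; simp
  have hTU : ∀ i, T (U i) = μ i • U i := by
    intro i
    rw [hU]
    have := hsym.apply_eigenvectorBasis finrank_euclideanSpace_fin (σ i)
    exact this
  have hanti : Antitone μ := by
    intro a b hab
    have := Tuple.monotone_sort (fun i => - lam i) hab
    simpa [hμ] using this
  have hquad : ∀ q, ∑ j, ⟪y j, q⟫ ^ 2 = ∑ i, μ i * ⟪U i, q⟫ ^ 2 := by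
    intro q
    rw [← hquad0]
    rw [← U.sum_inner_mul_inner q (T q)]
    refine Finset.sum_congr rfl fun i _ => ?_
    rw [← hsym (U i) q, hTU, real_inner_smul_left, real_inner_comm q (U i)]
    ring
  have hμ0 : ∀ i, 0 ≤ μ i := by
    intro i
    have h1 : ⟪U i, T (U i)⟫ = μ i := by
      rw [hTU, real_inner_smul_right, real_inner_self_eq_norm_sq, U.orthonormal.1 i]
      simp
    rw [← h1, hquad0]
    exact Finset.sum_nonneg fun j _ => sq_nonneg _
  exact ⟨μ, U, hanti, hμ0, hquad⟩

lemma truncCost_eq {D N K : ℕ} (Y : Matrix (Fin D) (Fin N) ℝ)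
    (X : Matrix (Fin K) (Fin N) ℝ) (G : Matrix (Fin D) (Fin K) ℝ) (b : ℕ) :
    truncCost Y X G b = ∑ j, ‖col Y j -
      ∑ k : Fin K, if (k : ℕ) < b then X k j • col G k else 0‖ ^ 2 := by
  rw [truncCost, Finset.sum_comm]
  refine Finset.sum_congr rfl fun j _ => ?_
  rw [normsq]
  refine Finset.sum_congr rfl fun i _ => ?_
  have hv : (col Y j - ∑ k : Fin K, if (k : ℕ) < b then X k j • col G k else 0) i
      = Y i j - ∑ k : Fin K, if (k : ℕ) < b then G i k * X k j else 0 := by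
    rw [PiLp.sub_apply, col_apply, piLp_sum_apply]
    congr 1
    refine Finset.sum_congr rfl fun k _ => ?_
    by_cases hk : (k : ℕ) < b
    · rw [if_pos hk, if_pos hk, PiLp.smul_apply, col_apply, smul_eq_mul, mul_comm]
    · rw [if_neg hk, if_neg hk, PiLp.zero_apply]
  rw [hv]

lemma lower_bound {D N K : ℕ} (y : Fin N → EuclideanSpace ℝ (Fin D)) (μ : Fin D → ℝ)
    (U : OrthonormalBasis (Fin D) ℝ (EuclideanSpace ℝ (Fin D)))
    (hanti : Antitone μ) (hμ0 : ∀ i, 0 ≤ μ i)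
    (hquad : ∀ q : EuclideanSpace ℝ (Fin D),
      ∑ j, ⟪y j, q⟫ ^ 2 = ∑ i, μ i * ⟪U i, q⟫ ^ 2)
    {b : ℕ} (hbK : b ≤ K)
    (x : Fin K → Fin N → ℝ) (g : Fin K → EuclideanSpace ℝ (Fin D)) :
    (∑ j, ‖y j‖ ^ 2) - (∑ i : Fin D, if (i : ℕ) < b then μ i else 0)
      ≤ ∑ j, ‖y j - ∑ k : Fin K, if (k : ℕ) < b then x k j • g k else 0‖ ^ 2 := by
  classical
  set W : Submodule ℝ (EuclideanSpace ℝ (Fin D)) :=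
    Submodule.span ℝ (Set.range fun t : Fin b => g (Fin.castLE hbK t)) with hW
  set r := Module.finrank ℝ W with hrdef
  have hr : r ≤ b := by
    have := finrank_range_le_card (R := ℝ) (fun t : Fin b => g (Fin.castLE hbK t))
    simpa [Set.finrank, hrdef, hW] using this
  set Q := stdOrthonormalBasis ℝ W with hQ
  have hq : Orthonormal ℝ (fun l : Fin r => (Q l : EuclideanSpace ℝ (Fin D))) := by
    rw [orthonormal_iff_ite]
    intro l l'
    have := orthonormal_iff_ite.mp Q.orthonormal l l'
    rwa [Submodule.coe_inner] at this
  have hmem : ∀ j, (∑ k : Fin K, if (k : ℕ) < b then x k j • g k else 0) ∈ W := by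
    intro j
    refine Submodule.sum_mem _ fun k _ => ?_
    by_cases hk : (k : ℕ) < b
    · rw [if_pos hk]
      exact Submodule.smul_mem _ _ (Submodule.subset_span ⟨⟨(k : ℕ), hk⟩, rfl⟩)
    · rw [if_neg hk]; exact Submodule.zero_mem _
  set P : Fin N → EuclideanSpace ℝ (Fin D) :=
    fun j => (W.orthogonalProjectionOnto (y j) : EuclideanSpace ℝ (Fin D)) with hP
  have step1 : ∀ j, ‖y j‖ ^ 2 - ‖P j‖ ^ 2
      ≤ ‖y j - ∑ k : Fin K, if (k : ℕ) < b then x k j • g k else 0‖ ^ 2 := by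
    intro j
    set m := ∑ k : Fin K, if (k : ℕ) < b then x k j • g k else 0 with hm
    have hyP : y j - P j ∈ Wᗮ := Submodule.sub_starProjection_mem_orthogonal (K := W) (y j)
    have h1 : ⟪y j - P j, P j - m⟫ = 0 := by
      have := (Submodule.mem_orthogonal' W (y j - P j)).mp hyP
      exact this _ (Submodule.sub_mem _ (W.orthogonalProjectionOnto (y j)).2 (hmem j))
    have h2 : ⟪y j - P j, P j⟫ = 0 := by
      have := (Submodule.mem_orthogonal' W (y j - P j)).mp hyP
      exact this _ (W.orthogonalProjectionOnto (y j)).2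
    have e1 : y j - m = (y j - P j) + (P j - m) := by abel
    have e2 : y j = (y j - P j) + P j := by abel
    have h3 : ‖y j - m‖ ^ 2 = ‖y j - P j‖ ^ 2 + ‖P j - m‖ ^ 2 := by
      rw [e1, norm_add_sq_real, h1]; ring
    have h4 : ‖y j‖ ^ 2 = ‖y j - P j‖ ^ 2 + ‖P j‖ ^ 2 := by
      nth_rewrite 1 [e2]
      rw [norm_add_sq_real, h2]; ring
    nlinarith [sq_nonneg ‖P j - m‖]
  have step2 : ∀ j, ‖P j‖ ^ 2 = ∑ l : Fin r, ⟪(Q l : EuclideanSpace ℝ (Fin D)), y j⟫ ^ 2 := by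
    intro j
    have hco : ∀ l : Fin r, ⟪Q l, W.orthogonalProjectionOnto (y j)⟫
        = ⟪(Q l : EuclideanSpace ℝ (Fin D)), y j⟫ := by
      intro l
      rw [Submodule.coe_inner]
      have hyP : y j - P j ∈ Wᗮ := Submodule.sub_starProjection_mem_orthogonal (K := W) (y j)
      have h0 : ⟪(Q l : EuclideanSpace ℝ (Fin D)), y j - P j⟫ = 0 :=
        (Submodule.mem_orthogonal W (y j - P j)).mp hyP _ (Q l).2
      rw [inner_sub_right] at h0
      linarith [h0]
    have hPar := Q.sum_inner_mul_inner (W.orthogonalProjectionOnto (y j))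
      (W.orthogonalProjectionOnto (y j))
    have hnorm : ⟪W.orthogonalProjectionOnto (y j), W.orthogonalProjectionOnto (y j)⟫ = ‖P j‖ ^ 2 := by
      rw [Submodule.coe_inner, real_inner_self_eq_norm_sq]
    rw [hnorm] at hPar
    rw [← hPar]
    refine Finset.sum_congr rfl fun l _ => ?_
    rw [real_inner_comm (Q l) (W.orthogonalProjectionOnto (y j)), hco l]
    ring
  set c : Fin D → ℝ := fun i => ∑ l : Fin r, ⟪U i, (Q l : EuclideanSpace ℝ (Fin D))⟫ ^ 2 with hc
  have hc0 : ∀ i, 0 ≤ c i := fun i => Finset.sum_nonneg fun l _ => sq_nonneg _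
  have hc1 : ∀ i, c i ≤ 1 := by
    intro i
    have := hq.sum_inner_products_le (U i) (s := Finset.univ)
    have hU1 : ‖U i‖ = 1 := U.orthonormal.1 i
    rw [hU1] at this
    calc c i = ∑ l : Fin r, ‖⟪(Q l : EuclideanSpace ℝ (Fin D)), U i⟫‖ ^ 2 := by
          refine Finset.sum_congr rfl fun l _ => ?_
          rw [Real.norm_eq_abs, sq_abs, real_inner_comm]
      _ ≤ 1 ^ 2 := this
      _ = 1 := one_pow 2
  have hcsum : ∑ i, c i ≤ (b : ℝ) := by
    have hr' : ∑ i, c i = (r : ℝ) := by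
      rw [Finset.sum_comm]
      have : ∀ l : Fin r, ∑ i, ⟪U i, (Q l : EuclideanSpace ℝ (Fin D))⟫ ^ 2 = 1 := by
        intro l
        have := U.sum_inner_mul_inner (Q l : EuclideanSpace ℝ (Fin D))
          (Q l : EuclideanSpace ℝ (Fin D))
        have hn : ⟪(Q l : EuclideanSpace ℝ (Fin D)), (Q l : EuclideanSpace ℝ (Fin D))⟫ = 1 := by
          rw [real_inner_self_eq_norm_sq]
          have : ‖(Q l : EuclideanSpace ℝ (Fin D))‖ = 1 := hq.1 l
          rw [this]; norm_num
        rw [hn] at this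
        rw [← this]
        refine Finset.sum_congr rfl fun i _ => ?_
        rw [real_inner_comm (Q l : EuclideanSpace ℝ (Fin D)) (U i)]
        ring
      rw [Finset.sum_congr rfl fun l _ => this l]
      simp
    rw [hr']
    exact_mod_cast hr
  have hKF : ∑ i, μ i * c i ≤ ∑ i : Fin D, if (i : ℕ) < b then μ i else 0 :=
    kyfan hanti hμ0 hc0 hc1 hcsum
  have hPsum : ∑ j, ‖P j‖ ^ 2 ≤ ∑ i : Fin D, if (i : ℕ) < b then μ i else 0 := by
    have e3 : ∑ j, ‖P j‖ ^ 2 = ∑ i, μ i * c i := by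
      calc ∑ j, ‖P j‖ ^ 2
          = ∑ j, ∑ l : Fin r, ⟪(Q l : EuclideanSpace ℝ (Fin D)), y j⟫ ^ 2 :=
            Finset.sum_congr rfl fun j _ => step2 j
        _ = ∑ l : Fin r, ∑ j, ⟪y j, (Q l : EuclideanSpace ℝ (Fin D))⟫ ^ 2 := by
            rw [Finset.sum_comm]
            exact Finset.sum_congr rfl fun l _ => Finset.sum_congr rfl fun j _ => by
              rw [real_inner_comm]
        _ = ∑ l : Fin r, ∑ i, μ i * ⟪U i, (Q l : EuclideanSpace ℝ (Fin D))⟫ ^ 2 :=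
            Finset.sum_congr rfl fun l _ => hquad _
        _ = ∑ i, μ i * c i := by
            rw [Finset.sum_comm]
            exact Finset.sum_congr rfl fun i _ => by rw [hc, Finset.mul_sum]
    rw [e3]; exact hKF
  have := Finset.sum_le_sum fun j (_ : j ∈ Finset.univ) => step1 j
  rw [Finset.sum_sub_distrib] at this
  linarith

lemma achiever {D N K : ℕ} (hKD : K ≤ D) (y : Fin N → EuclideanSpace ℝ (Fin D))
    (μ : Fin D → ℝ) (U : OrthonormalBasis (Fin D) ℝ (EuclideanSpace ℝ (Fin D)))
    (heig : ∀ i, ∑ j, ⟪y j, U i⟫ ^ 2 = μ i) :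
    ∃ (x : Fin K → Fin N → ℝ) (g : Fin K → EuclideanSpace ℝ (Fin D)),
      ∀ b : ℕ, b ≤ K →
        ∑ j, ‖y j - ∑ k : Fin K, if (k : ℕ) < b then x k j • g k else 0‖ ^ 2
          = (∑ j, ‖y j‖ ^ 2) - ∑ i : Fin D, if (i : ℕ) < b then μ i else 0 := by
  classical
  set u : Fin K → EuclideanSpace ℝ (Fin D) := fun k => U (Fin.castLE hKD k) with hu
  have huon : Orthonormal ℝ u :=
    U.orthonormal.comp _ (Fin.castLE_injective hKD)
  refine ⟨fun k j => ⟪u k, y j⟫, u, fun b hbK => ?_⟩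
  have hbD : b ≤ D := le_trans hbK hKD
  set s : Finset (Fin K) := Finset.univ.filter (fun k => (k : ℕ) < b) with hs
  have hsum_eq : ∀ j, (∑ k : Fin K, if (k : ℕ) < b then ⟪u k, y j⟫ • u k else 0)
      = ∑ k ∈ s, ⟪u k, y j⟫ • u k := by
    intro j
    rw [hs, Finset.sum_filter]
  have perj : ∀ j, ‖y j - ∑ k ∈ s, ⟪u k, y j⟫ • u k‖ ^ 2
      = ‖y j‖ ^ 2 - ∑ k ∈ s, ⟪u k, y j⟫ ^ 2 := by
    intro j
    set v := ∑ k ∈ s, ⟪u k, y j⟫ • u k with hv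
    have hyv : ⟪y j, v⟫ = ∑ k ∈ s, ⟪u k, y j⟫ ^ 2 := by
      rw [hv, inner_sum]
      refine Finset.sum_congr rfl fun k _ => ?_
      rw [real_inner_smul_right, real_inner_comm (y j) (u k)]
      ring
    have hvv : ‖v‖ ^ 2 = ∑ k ∈ s, ⟪u k, y j⟫ ^ 2 := by
      rw [← real_inner_self_eq_norm_sq, hv, sum_inner]
      refine Finset.sum_congr rfl fun k hk => ?_
      rw [real_inner_smul_left, huon.inner_right_sum _ hk]
      ring
    rw [norm_sub_sq_real, hyv, hvv]
    ring
  have hμs : ∑ k ∈ s, (fun k => ∑ j, ⟪u k, y j⟫ ^ 2) k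
      = ∑ i : Fin D, if (i : ℕ) < b then μ i else 0 := by
    have h1 : ∑ k ∈ s, (fun k => ∑ j, ⟪u k, y j⟫ ^ 2) k
        = ∑ k : Fin K, if (k : ℕ) < b then μ (Fin.castLE hKD k) else 0 := by
      rw [hs, ← Finset.sum_filter]
      refine Finset.sum_congr rfl fun k _ => ?_
      rw [← heig (Fin.castLE hKD k)]
      refine Finset.sum_congr rfl fun j _ => ?_
      rw [real_inner_comm]
    rw [h1, sum_ite_lt hbK (fun k => μ (Fin.castLE hKD k)), sum_ite_lt hbD μ]
    rfl
  calc ∑ j, ‖y j - ∑ k : Fin K, if (k : ℕ) < b then ⟪u k, y j⟫ • u k else 0‖ ^ 2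
      = ∑ j, (‖y j‖ ^ 2 - ∑ k ∈ s, ⟪u k, y j⟫ ^ 2) := by
        refine Finset.sum_congr rfl fun j _ => ?_
        rw [hsum_eq j, perj j]
    _ = (∑ j, ‖y j‖ ^ 2) - ∑ i : Fin D, if (i : ℕ) < b then μ i else 0 := by
        rw [Finset.sum_sub_distrib, Finset.sum_comm, ← hμs]

lemma truncCost_K {D N K : ℕ} (Y : Matrix (Fin D) (Fin N) ℝ)
    (X : Matrix (Fin K) (Fin N) ℝ) (G : Matrix (Fin D) (Fin K) ℝ) :
    truncCost Y X G K = ∑ i, ∑ j, (Y i j - (G * X) i j) ^ 2 := by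
  rw [truncCost]
  refine Finset.sum_congr rfl fun i _ => Finset.sum_congr rfl fun j _ => ?_
  have h : (∑ k : Fin K, if (k : ℕ) < K then G i k * X k j else 0) = (G * X) i j := by
    rw [Matrix.mul_apply]
    exact Finset.sum_congr rfl fun k _ => if_pos k.isLt
  rw [h]

end ND

/-- Every global minimizer of the nested dropout cost is a global minimizer of the
standard autoencoder cost `‖Y − Γ X‖_F²`. -/
theorem nd_minimizer_minimizes_autoencoder
    {D N K : ℕ} (hK : 1 ≤ K) (hKD : K ≤ D)
    (Y : Matrix (Fin D) (Fin N) ℝ) (p : Fin K → ℝ)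
    (hp : ∀ b, 0 < p b) (hsum : ∑ b, p b = 1)
    (Xs : Matrix (Fin K) (Fin N) ℝ) (Gs : Matrix (Fin D) (Fin K) ℝ)
    (hmin : ∀ (X : Matrix (Fin K) (Fin N) ℝ) (G : Matrix (Fin D) (Fin K) ℝ),
      ndCost Y p Xs Gs ≤ ndCost Y p X G) :
    ∀ (X : Matrix (Fin K) (Fin N) ℝ) (G : Matrix (Fin D) (Fin K) ℝ),
      ∑ i, ∑ j, (Y i j - (Gs * Xs) i j) ^ 2 ≤ ∑ i, ∑ j, (Y i j - (G * X) i j) ^ 2 := by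
  classical
  intro X G
  open RealInnerProductSpace in
  obtain ⟨μ, U, hanti, hμ0, hquad⟩ := ND.spectral (fun j => ND.col Y j)
  set y : Fin N → EuclideanSpace ℝ (Fin D) := fun j => ND.col Y j with hy
  -- the optimal value of the b-truncation cost
  set S : ℝ := ∑ j, ‖y j‖ ^ 2 with hS
  set m : ℕ → ℝ := fun b => S - ∑ i : Fin D, if (i : ℕ) < b then μ i else 0 with hm
  -- lower bound for every (X, G) and b ≤ K
  have hlow : ∀ (X' : Matrix (Fin K) (Fin N) ℝ) (G' : Matrix (Fin D) (Fin K) ℝ)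
      (b : ℕ), b ≤ K → m b ≤ truncCost Y X' G' b := by
    intro X' G' b hb
    rw [ND.truncCost_eq]
    exact ND.lower_bound y μ U hanti hμ0 hquad hb (fun k j => X' k j) (fun k => ND.col G' k)
  -- an achiever of all bounds simultaneously
  have heig : ∀ i, ∑ j, ⟪y j, U i⟫ ^ 2 = μ i := by
    intro i
    rw [hquad (U i)]
    have : ∀ i' : Fin D, μ i' * ⟪U i', U i⟫ ^ 2
        = if i' = i then μ i' else 0 := by
      intro i'
      have := orthonormal_iff_ite.mp U.orthonormal i' i
      rw [this]
      by_cases h : i' = i <;> simp [h]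
    rw [Finset.sum_congr rfl fun i' _ => this i']
    simp
  obtain ⟨xa, ga, hach⟩ := ND.achiever (K := K) hKD y μ U heig
  set Xa : Matrix (Fin K) (Fin N) ℝ := fun k j => xa k j with hXa
  set Ga : Matrix (Fin D) (Fin K) ℝ := fun i k => ga k i with hGa
  have hcolGa : ∀ k, ND.col Ga k = ga k := fun k => rfl
  have hach' : ∀ b : ℕ, b ≤ K → truncCost Y Xa Ga b = m b := by
    intro b hb
    rw [ND.truncCost_eq, hm]
    have := hach b hb
    simpa [hcolGa] using this
  -- the minimizer attains the optimal value at every truncation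
  have hndopt : ndCost Y p Xs Gs ≤ ∑ b : Fin K, p b * m ((b : ℕ) + 1) := by
    have := hmin Xa Ga
    rw [ndCost] at this ⊢
    refine le_trans this (le_of_eq ?_)
    refine Finset.sum_congr rfl fun b _ => ?_
    rw [hach' ((b : ℕ) + 1) b.isLt]
  have hterm : ∀ b : Fin K, truncCost Y Xs Gs ((b : ℕ) + 1) = m ((b : ℕ) + 1) := by
    have hnonneg : ∀ b : Fin K, 0 ≤ p b * (truncCost Y Xs Gs ((b : ℕ) + 1) - m ((b : ℕ) + 1)) :=
      fun b => mul_nonneg (le_of_lt (hp b)) (by linarith [hlow Xs Gs ((b : ℕ) + 1) b.isLt])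
    have hsum0 : ∑ b : Fin K, p b * (truncCost Y Xs Gs ((b : ℕ) + 1) - m ((b : ℕ) + 1)) = 0 := by
      have h1 : ∑ b : Fin K, p b * (truncCost Y Xs Gs ((b : ℕ) + 1) - m ((b : ℕ) + 1))
          = ndCost Y p Xs Gs - ∑ b : Fin K, p b * m ((b : ℕ) + 1) := by
        rw [ndCost, ← Finset.sum_sub_distrib]
        exact Finset.sum_congr rfl fun b _ => by ring
      have h2 : 0 ≤ ∑ b : Fin K, p b * (truncCost Y Xs Gs ((b : ℕ) + 1) - m ((b : ℕ) + 1)) :=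
        Finset.sum_nonneg fun b _ => hnonneg b
      rw [h1] at h2 ⊢
      linarith [hndopt]
    intro b
    have := (Finset.sum_eq_zero_iff_of_nonneg (fun b _ => hnonneg b)).mp hsum0 b (Finset.mem_univ b)
    have hpb := hp b
    have := mul_eq_zero.mp this
    rcases this with h | h
    · exact absurd h (ne_of_gt hpb)
    · linarith
  -- conclude at b = K
  have hKlast : truncCost Y Xs Gs K = m K := by
    have hb : (((⟨K - 1, by omega⟩ : Fin K) : ℕ) + 1) = K := by
      simp; omega
    have := hterm ⟨K - 1, by omega⟩
    rwa [hb] at this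
  have h1 : ∑ i, ∑ j, (Y i j - (Gs * Xs) i j) ^ 2 = m K := by
    rw [← ND.truncCost_K, hKlast]
  have h2 : m K ≤ ∑ i, ∑ j, (Y i j - (G * X) i j) ^ 2 := by
    rw [← ND.truncCost_K]
    exact hlow X G K le_rfl
  linarith
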